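/- arXiv:0707.3796 — 2 statements merged into one kernel-verified Lean document; each statement's English description precedes it below -/
import Mathlib

section
/- If z is a p-vector whose annihilator contains linearly independent vectors z₁,…,z_q, then there exists a (p−q)-vector y such that z = z₁ ∧ z₂ ∧ ⋯ ∧ z_q ∧ y. -/
open ExteriorAlgebra

section Aux

variable {K : Type*} [Field K] {V : Type*} [AddCommGroup V] [Module K V]

/-- Graded anticommutation with a degree-one element. -/
lemma aux_mul_ι (n : ℕ) {x : ExteriorAlgebra K V} (hx : x ∈ ⋀[K]^n V) (v : V) :
    x * ι K v = ((-1 : K) ^ n) • (ι K v * x) := by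
  induction hx using Submodule.pow_induction_on_left' with
  | algebraMap r =>
      rw [pow_zero, one_smul, Algebra.commutes]
  | add x y i hx hy ihx ihy =>
      rw [add_mul, mul_add, ihx, ihy, smul_add]
  | mem_mul m hm i x hx ih =>
      obtain ⟨u, rfl⟩ := hm
      have huv : ι K u * ι K v = -(ι K v * ι K u) :=
        eq_neg_of_add_eq_zero_left (ι_add_mul_swap u v)
      rw [mul_assoc, ih, mul_smul_comm, ← mul_assoc, huv, neg_mul, mul_assoc,
        smul_neg, ← neg_smul, pow_succ]
      ring_nf

lemma aux_mul_ι_eq_zero {n : ℕ} {x : ExteriorAlgebra K V} (hx : x ∈ ⋀[K]^n V) (v : V)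
    (h : x * ι K v = 0) : ι K v * x = 0 := by
  rw [aux_mul_ι n hx v, smul_eq_zero] at h
  rcases h with h | h
  · exact absurd h (pow_ne_zero n (neg_ne_zero.2 one_ne_zero))
  · exact h

/-- Contraction lowers degree by one. -/
lemma aux_contract_mem (d : Module.Dual K V) (n : ℕ) {x : ExteriorAlgebra K V}
    (hx : x ∈ ⋀[K]^n V) :
    CliffordAlgebra.contractLeft (Q := (0 : QuadraticForm K V)) d x ∈ ⋀[K]^(n - 1) V := by
  suffices h : CliffordAlgebra.contractLeft (Q := (0 : QuadraticForm K V)) d x ∈ ⋀[K]^(n - 1) V ∧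
      (n = 0 → CliffordAlgebra.contractLeft (Q := (0 : QuadraticForm K V)) d x = 0) from h.1
  induction hx using Submodule.pow_induction_on_left' with
  | algebraMap r =>
      refine ⟨?_, fun _ => ?_⟩ <;>
        simp [CliffordAlgebra.contractLeft_algebraMap]
  | add x y i hx hy ihx ihy =>
      exact ⟨by simpa using add_mem ihx.1 ihy.1,
        fun h => by rw [map_add, ihx.2 h, ihy.2 h, add_zero]⟩
  | mem_mul m hm i x hx ih =>
      obtain ⟨u, rfl⟩ := hm
      constructor
      · rw [CliffordAlgebra.contractLeft_ι_mul]
        refine sub_mem ?_ ?_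
        · simpa using Submodule.smul_mem _ _ hx
        · rcases Nat.eq_zero_or_eq_succ_pred i with hi | hi
          · rw [ih.2 hi, mul_zero]
            exact zero_mem _
          · have h1 : ι K u ∈ LinearMap.range (ι K : V →ₗ[K] ExteriorAlgebra K V) ^ 1 := by
              rw [pow_one]; exact LinearMap.mem_range_self _ u
            have h2 := SetLike.mul_mem_graded (A := fun i : ℕ => ⋀[K]^i V) h1 ih.1
            have heq : 1 + (i - 1) = i.succ - 1 := by omega
            exact heq ▸ h2
      · intro h; exact absurd h (Nat.succ_ne_zero i)

/-- Existence of a dual functional separating the head of a linearly independent family. -/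
lemma aux_dual {q : ℕ} {f : Fin (q + 1) → V} (hf : LinearIndependent K f) :
    ∃ d : Module.Dual K V, d (f 0) = 1 ∧ ∀ j : Fin q, d (f j.succ) = 0 := by
  have h1 : LinearIndepOn K id (Set.range f) := (linearIndepOn_id_range_iff hf.injective).mpr hf
  let b := Module.Basis.extend h1
  have hmem : ∀ i : Fin (q + 1), f i ∈ h1.extend (Set.subset_univ _) := fun i =>
    h1.subset_extend _ ⟨i, rfl⟩
  refine ⟨b.coord ⟨f 0, hmem 0⟩, ?_, fun j => ?_⟩
  · have hb : b ⟨f 0, hmem 0⟩ = f 0 := Module.Basis.extend_apply_self h1 _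
    have h := congrArg b.repr hb
    rw [Module.Basis.repr_self] at h
    rw [Module.Basis.coord_apply, ← h, Finsupp.single_eq_same]
  · have hb : b ⟨f j.succ, hmem j.succ⟩ = f j.succ := Module.Basis.extend_apply_self h1 _
    have h := congrArg b.repr hb
    rw [Module.Basis.repr_self] at h
    rw [Module.Basis.coord_apply, ← h]
    rw [Finsupp.single_eq_of_ne]
    intro h
    exact (Fin.succ_ne_zero j) (hf.injective (congrArg Subtype.val h).symm)

lemma aux_key {q : ℕ} : ∀ (p : ℕ) (z : ExteriorAlgebra K V),
    z ∈ ⋀[K]^p V → ∀ f : Fin q → V, LinearIndependent K f →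
    (∀ i, z * ι K (f i) = 0) →
    ∃ y ∈ ⋀[K]^(p - q) V, z = (ιMulti K q f) * y := by
  induction q with
  | zero =>
      intro p z hz f _ _
      exact ⟨z, hz, by rw [ιMulti_zero_apply, one_mul]⟩
  | succ q ih =>
      intro p z hz f hf hann
      obtain ⟨d, hd0, hds⟩ := aux_dual hf
      set w := CliffordAlgebra.contractLeft (Q := (0 : QuadraticForm K V)) d z with hw_def
      have hw : w ∈ ⋀[K]^(p - 1) V := aux_contract_mem d p hz
      have hleft : ∀ i : Fin (q + 1), ι K (f i) * z = 0 := fun i =>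
        aux_mul_ι_eq_zero hz (f i) (hann i)
      have hz_eq : z = ι K (f 0) * w := by
        have := CliffordAlgebra.contractLeft_ι_mul (Q := (0 : QuadraticForm K V)) d (f 0) z
        rw [hleft 0, map_zero, hd0, one_smul] at this
        exact (sub_eq_zero.mp this.symm)
      have hann' : ∀ j : Fin q, w * ι K (f j.succ) = 0 := by
        intro j
        have := CliffordAlgebra.contractLeft_ι_mul (Q := (0 : QuadraticForm K V)) d (f j.succ) z
        rw [hleft j.succ, map_zero, hds j, zero_smul, zero_sub, eq_comm, neg_eq_zero] at this
        have hιw : ι K (f j.succ) * w = 0 := this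
        rw [aux_mul_ι (p - 1) hw (f j.succ), hιw, smul_zero]
      have hg : LinearIndependent K (f ∘ Fin.succ) := hf.comp Fin.succ (Fin.succ_injective q)
      obtain ⟨y, hy, hwy⟩ := ih (p - 1) w hw (f ∘ Fin.succ) hg hann'
      refine ⟨y, ?_, ?_⟩
      · rwa [Nat.sub_sub, Nat.add_comm] at hy
      · rw [hz_eq, hwy, ← mul_assoc, ιMulti_succ_apply]
        rfl

end Aux

/-- If `z` is a `p`-vector whose annihilator contains linearly independent vectors
`z₁, …, z_q`, then there is a `(p-q)`-vector `y` with `z = z₁ ∧ ⋯ ∧ z_q ∧ y`. -/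
theorem exists_wedge_factorization
    (K : Type*) [Field K] (V : Type*) [AddCommGroup V] [Module K V]
    [FiniteDimensional K V] (p q : ℕ) (z : ExteriorAlgebra K V)
    (hz : z ∈ ⋀[K]^p V) (f : Fin q → V) (hf : LinearIndependent K f)
    (hann : ∀ i, z * ExteriorAlgebra.ι K (f i) = 0) :
    ∃ y ∈ ⋀[K]^(p - q) V, z = (ExteriorAlgebra.ιMulti K q f) * y := by
  exact aux_key p z hz f hf hann
end

section
/- Let H be a Hermitian operator on ℂ^{n+1} with a nondegenerate eigenvector e₀ of eigenvalue E₀, and let A = Re H, B = Im H (restricted to the orthogonal complement of e₀). Then the characteristic polynomial of the real 2n×2n Hessian matrix 𝓗 = [[A − E₀I, −B],[B, A − E₀I]] satisfies det(𝓗 − ωI_{2n}) = |det(H − (E₀+ω)I_n)|², so the spectrum of 𝓗 equals the set of transition energies E_i − E₀, each with doubled multiplicity. -/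
open Matrix Complex

lemma det_fromBlocks_normSq (n : ℕ) (X Y : Matrix (Fin n) (Fin n) ℝ) :
    (fromBlocks X (-Y) Y X).det =
      Complex.normSq ((X.map (Complex.ofReal) + Complex.I • Y.map (Complex.ofReal)).det) := by
  set X' : Matrix (Fin n) (Fin n) ℂ := X.map Complex.ofReal with hX'
  set Y' : Matrix (Fin n) (Fin n) ℂ := Y.map Complex.ofReal with hY'
  set M : Matrix (Fin n) (Fin n) ℂ := X' + Complex.I • Y' with hM
  set N : Matrix (Fin n) (Fin n) ℂ := X' - Complex.I • Y' with hN
  have hcast : ((fromBlocks X (-Y) Y X).det : ℂ) = (fromBlocks X' (-Y') Y' X').det := by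
    have := RingHom.map_det Complex.ofRealHom (fromBlocks X (-Y) Y X)
    rw [show (Complex.ofRealHom (fromBlocks X (-Y) Y X).det : ℂ)
        = ((fromBlocks X (-Y) Y X).det : ℂ) from rfl] at this
    rw [this, RingHom.mapMatrix_apply]
    congr 1
    ext (i|i) (j|j) <;> simp [fromBlocks, hX', hY']
  set S : Matrix (Fin n ⊕ Fin n) (Fin n ⊕ Fin n) ℂ :=
    fromBlocks 1 1 (Complex.I • 1) (-(Complex.I • 1)) with hS
  have hmul : fromBlocks X' (-Y') Y' X' * S = S * fromBlocks N 0 0 M := by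
    rw [hS, fromBlocks_multiply, fromBlocks_multiply, fromBlocks_inj]
    refine ⟨?_, ?_, ?_, ?_⟩ <;>
      simp [hN, hM, Matrix.mul_smul, Matrix.smul_mul, smul_sub, smul_add, smul_smul,
        Complex.I_mul_I, sub_eq_add_neg] <;> abel
  haveI : Invertible (1 : Matrix (Fin n) (Fin n) ℂ) := invertibleOne
  have hSdet : S.det ≠ 0 := by
    rw [hS, Matrix.det_fromBlocks₁₁]
    have : (-(Complex.I • 1) - Complex.I • (1 : Matrix (Fin n) (Fin n) ℂ) * ⅟(1 : Matrix (Fin n) (Fin n) ℂ) * 1) = (-2 * Complex.I) • (1 : Matrix (Fin n) (Fin n) ℂ) := by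
      simp; module
    rw [this, Matrix.det_smul]
    simp only [Matrix.det_one, mul_one, one_mul]
    exact pow_ne_zero _ (by simp [Complex.I_ne_zero])
  have hNdet : N.det = starRingEnd ℂ M.det := by
    have hconj : N = M.map (starRingEnd ℂ) := by
      ext i j
      simp [hN, hM, hX', hY', Matrix.map_apply]
      ring
    rw [hconj, ← RingHom.mapMatrix_apply, ← RingHom.map_det]
  have hdet : (fromBlocks X' (-Y') Y' X').det = N.det * M.det := by
    have h1 := congrArg Matrix.det hmul
    rw [Matrix.det_mul, Matrix.det_mul, Matrix.det_fromBlocks_zero₂₁] at h1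
    rw [mul_comm S.det _] at h1
    exact mul_right_cancel₀ hSdet h1
  have : ((fromBlocks X (-Y) Y X).det : ℂ) = (Complex.normSq M.det : ℂ) := by
    rw [hcast, hdet, hNdet, mul_comm, Complex.mul_conj]
  exact_mod_cast this

/-- For a Hermitian `n×n` matrix `H` (the restriction of the Hamiltonian to the
orthogonal complement of the eigenvector `e₀` with eigenvalue `E₀`), with
`A = Re H`, `B = Im H`, the real `2n×2n` Hessian `𝓗 = [[A−E₀I, −B],[B, A−E₀I]]`
satisfies `det(𝓗 − ωI) = |det(H − (E₀+ω)I)|²`; hence `ω` belongs to the spectrum of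
`𝓗` iff `E₀ + ω` is an eigenvalue of `H`, i.e. the spectrum of `𝓗` is the set of
transition energies `E_i − E₀` (each occurring with doubled multiplicity, by the
displayed characteristic-polynomial identity). -/
theorem hessian_det_eq_normSq_det
    (n : ℕ) (H : Matrix (Fin n) (Fin n) ℂ) (hH : H.IsHermitian) (E₀ : ℝ) :
    let A : Matrix (Fin n) (Fin n) ℝ := H.map Complex.re
    let B : Matrix (Fin n) (Fin n) ℝ := H.map Complex.im
    let 𝓗 : Matrix (Fin n ⊕ Fin n) (Fin n ⊕ Fin n) ℝ :=
      Matrix.fromBlocks (A - E₀ • 1) (-B) B (A - E₀ • 1)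
    (∀ ω : ℝ, (𝓗 - ω • 1).det = Complex.normSq (H - ((E₀ + ω : ℝ) : ℂ) • 1).det) ∧
    (∀ ω : ℝ, ω ∈ spectrum ℝ 𝓗 ↔ ((E₀ + ω : ℝ) : ℂ) ∈ spectrum ℂ H) := by
  intro A B 𝓗
  have key : ∀ ω : ℝ, (𝓗 - ω • 1).det = Complex.normSq (H - ((E₀ + ω : ℝ) : ℂ) • 1).det := by
    intro ω
    have h1 : 𝓗 - ω • 1 = fromBlocks (A - E₀ • 1 - ω • 1) (-B) B (A - E₀ • 1 - ω • 1) := by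
      ext (i|i) (j|j) <;>
        simp [𝓗, fromBlocks, Matrix.sub_apply, Matrix.smul_apply, Matrix.one_apply]
    have h2 : H - ((E₀ + ω : ℝ) : ℂ) • 1 =
        (A - E₀ • 1 - ω • 1).map Complex.ofReal +
          Complex.I • B.map Complex.ofReal := by
      ext i j
      by_cases h : i = j <;>
        · apply Complex.ext <;>
            simp [A, B, Matrix.sub_apply, Matrix.add_apply, Matrix.smul_apply,
              Matrix.one_apply, Matrix.map_apply, h] <;> ring
    rw [h1, h2, det_fromBlocks_normSq]
  refine ⟨key, fun ω => ?_⟩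
  rw [spectrum.mem_iff, spectrum.mem_iff]
  rw [Matrix.isUnit_iff_isUnit_det, Matrix.isUnit_iff_isUnit_det]
  rw [isUnit_iff_ne_zero, isUnit_iff_ne_zero, not_not, not_not]
  have e1 : (algebraMap ℝ (Matrix (Fin n ⊕ Fin n) (Fin n ⊕ Fin n) ℝ)) ω - 𝓗
      = -(𝓗 - ω • 1) := by
    rw [Algebra.algebraMap_eq_smul_one]; abel
  have e2 : (algebraMap ℂ (Matrix (Fin n) (Fin n) ℂ)) ((E₀ + ω : ℝ) : ℂ) - H
      = -(H - ((E₀ + ω : ℝ) : ℂ) • 1) := by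
    rw [Algebra.algebraMap_eq_smul_one]; abel
  rw [e1, e2, Matrix.det_neg, Matrix.det_neg]
  simp only [Fintype.card_sum, Fintype.card_fin, mul_eq_zero]
  constructor
  · rintro (h | h)
    · exact absurd h (by simp [pow_ne_zero, neg_ne_zero])
    · right
      have := key ω
      rw [h] at this
      have h0 : Complex.normSq (H - ((E₀ + ω : ℝ) : ℂ) • 1).det = 0 := this.symm
      exact Complex.normSq_eq_zero.mp h0
  · rintro (h | h)
    · exact absurd h (by simp [pow_ne_zero, neg_ne_zero])
    · right
      rw [key ω, h]
      simp
end
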